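/- (Classical IVPM composition implies ultramodular) Let ℓ, r : ℝ → ℝ satisfy 0 ≤ ℓ x ≤ r x ≤ 1 for all x ∈ [0,1]. Suppose that for every measurable space Ω and every probability measure μ on Ω, the assignment E ↦ [ℓ (μ E), r (μ E)] satisfies the classical IVPM axioms: ℓ (μ ∅) = r (μ ∅) = 0; ℓ (μ Ω) = r (μ Ω) = 1; ℓ (μ Eᶜ) = 1 − r (μ E) and r (μ Eᶜ) = 1 − ℓ (μ E) for every measurable E; and ℓ (μ E) + ℓ (μ F) ≤ ℓ (μ (E ∪ F)) + ℓ (μ (E ∩ F)) and r (μ (E ∪ F)) + r (μ (E ∩ F)) ≤ r (μ E) + r (μ F) for all measurable E, F. Then (ℓ, r) is an ultramodular interval-valued map on [0,1]. -/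
import Mathlib
open MeasureTheory
open scoped Classical NNReal ENNReal

noncomputable def myM (x₀ x₁ x₂ : ℝ) : @Measure (Fin 4) ⊤ :=
  ENNReal.ofReal x₀ • @Measure.dirac (Fin 4) ⊤ 0 +
  ENNReal.ofReal x₁ • @Measure.dirac (Fin 4) ⊤ 1 +
  ENNReal.ofReal x₂ • @Measure.dirac (Fin 4) ⊤ 2 +
  ENNReal.ofReal (1 - (x₀ + x₁ + x₂)) • @Measure.dirac (Fin 4) ⊤ 3

lemma myM_apply (x₀ x₁ x₂ : ℝ) (h0 : 0 ≤ x₀) (h1 : 0 ≤ x₁) (h2 : 0 ≤ x₂)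
    (hs : x₀ + x₁ + x₂ ≤ 1) (S : Set (Fin 4)) :
    myM x₀ x₁ x₂ S = ENNReal.ofReal
      ((if (0:Fin 4) ∈ S then x₀ else 0) + (if (1:Fin 4) ∈ S then x₁ else 0)
        + (if (2:Fin 4) ∈ S then x₂ else 0)
        + (if (3:Fin 4) ∈ S then 1 - (x₀+x₁+x₂) else 0)) := by
  have e : myM x₀ x₁ x₂ S = ENNReal.ofReal x₀ * S.indicator 1 0 + ENNReal.ofReal x₁ * S.indicator 1 1
      + ENNReal.ofReal x₂ * S.indicator 1 2 + ENNReal.ofReal (1-(x₀+x₁+x₂)) * S.indicator 1 3 := by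
    simp [myM, Measure.dirac_apply' _ (by trivial : MeasurableSet[⊤] S)]
  rw [e]
  simp only [Set.indicator_apply, Pi.one_apply, mul_ite, mul_one, mul_zero]
  rw [ENNReal.ofReal_add, ENNReal.ofReal_add, ENNReal.ofReal_add] <;>
    first
    | (split_ifs <;> simp [ENNReal.ofReal_add, *] <;> try linarith)
    | (split_ifs <;> first | positivity | linarith)

noncomputable def myP (x₀ x₁ x₂ : ℝ) (h0 : 0 ≤ x₀) (h1 : 0 ≤ x₁) (h2 : 0 ≤ x₂)
    (hs : x₀ + x₁ + x₂ ≤ 1) : @ProbabilityMeasure (Fin 4) ⊤ :=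
  ⟨myM x₀ x₁ x₂, ⟨by rw [myM_apply x₀ x₁ x₂ h0 h1 h2 hs]; simp⟩⟩

lemma myP_real (x₀ x₁ x₂ : ℝ) (h0 : 0 ≤ x₀) (h1 : 0 ≤ x₁) (h2 : 0 ≤ x₂)
    (hs : x₀ + x₁ + x₂ ≤ 1) (S : Set (Fin 4)) :
    ((myP x₀ x₁ x₂ h0 h1 h2 hs S : ℝ≥0) : ℝ) =
      (if (0:Fin 4) ∈ S then x₀ else 0) + (if (1:Fin 4) ∈ S then x₁ else 0)
        + (if (2:Fin 4) ∈ S then x₂ else 0)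
        + (if (3:Fin 4) ∈ S then 1 - (x₀+x₁+x₂) else 0) := by
  have h := ProbabilityMeasure.ennreal_coeFn_eq_coeFn_toMeasure (myP x₀ x₁ x₂ h0 h1 h2 hs) S
  have h2' : (myP x₀ x₁ x₂ h0 h1 h2 hs).toMeasure S = myM x₀ x₁ x₂ S := rfl
  rw [h2', myM_apply x₀ x₁ x₂ h0 h1 h2 hs] at h
  have hv : 0 ≤ (if (0:Fin 4) ∈ S then x₀ else 0) + (if (1:Fin 4) ∈ S then x₁ else 0)
        + (if (2:Fin 4) ∈ S then x₂ else 0)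
        + (if (3:Fin 4) ∈ S then 1 - (x₀+x₁+x₂) else 0) := by
    split_ifs <;> linarith
  calc ((myP x₀ x₁ x₂ h0 h1 h2 hs S : ℝ≥0) : ℝ)
      = ((myP x₀ x₁ x₂ h0 h1 h2 hs S : ℝ≥0∞)).toReal := (ENNReal.coe_toReal _).symm
    _ = _ := by rw [h, ENNReal.toReal_ofReal hv]

open Matrix
open scoped ComplexOrder

/-- A projector on `ℂ^d`: an idempotent, self-adjoint matrix. -/
def IsProjector {d : ℕ} (P : Matrix (Fin d) (Fin d) ℂ) : Prop :=
  P * P = P ∧ Pᴴ = P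

/-- A quantum interval-valued probability measure (QIVPM) on `ℂ^d`,
given by the pair of interval-endpoint functions `L ≤ R`. -/
def IsQIVPM {d : ℕ} (L R : Matrix (Fin d) (Fin d) ℂ → ℝ) : Prop :=
  (∀ P, IsProjector P → 0 ≤ L P ∧ L P ≤ R P ∧ R P ≤ 1) ∧
  (L 0 = 0 ∧ R 0 = 0) ∧
  (L 1 = 1 ∧ R 1 = 1) ∧
  (∀ P, IsProjector P → L (1 - P) = 1 - R P ∧ R (1 - P) = 1 - L P) ∧
  (∀ P₀ P₁, IsProjector P₀ → IsProjector P₁ → P₀ * P₁ = P₁ * P₀ →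
    L P₀ + L P₁ ≤ L (P₀ + P₁ - P₀ * P₁) + L (P₀ * P₁) ∧
    R (P₀ + P₁ - P₀ * P₁) + R (P₀ * P₁) ≤ R P₀ + R P₁)

/-- A QIVPM is `δ`-deterministic if every projector's interval lies in `[0,δ]` or `[1-δ,1]`. -/
def IsDeltaDet {d : ℕ} (δ : ℝ) (L R : Matrix (Fin d) (Fin d) ℂ → ℝ) : Prop :=
  ∀ P, IsProjector P → R P ≤ δ ∨ 1 - δ ≤ L P

/-- A QIVPM is `0`-deterministic if every projector is assigned `[0,0]` or `[1,1]`. -/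
def IsZeroDet {d : ℕ} (L R : Matrix (Fin d) (Fin d) ℂ → ℝ) : Prop :=
  ∀ P, IsProjector P → (L P = 0 ∧ R P = 0) ∨ (L P = 1 ∧ R P = 1)

/-- A state (density matrix) on `ℂ^d`. -/
def IsState {d : ℕ} (ρ : Matrix (Fin d) (Fin d) ℂ) : Prop :=
  ρ.PosSemidef ∧ ρ.trace = 1

/-- An interval-valued map on `[0,1]`. -/
def IsIntervalValuedMap (l r : ℝ → ℝ) : Prop :=
  ∀ x ∈ Set.Icc (0:ℝ) 1, 0 ≤ l x ∧ l x ≤ r x ∧ r x ≤ 1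

/-- An ultramodular interval-valued map on `[0,1]`. -/
def IsUltramodular (l r : ℝ → ℝ) : Prop :=
  IsIntervalValuedMap l r ∧
  (l 0 = 0 ∧ r 0 = 0) ∧
  (l 1 = 1 ∧ r 1 = 1) ∧
  (∀ x ∈ Set.Icc (0:ℝ) 1, l (1 - x) = 1 - r x ∧ r (1 - x) = 1 - l x) ∧
  (∀ x₀ x₁ x₂ : ℝ, 0 ≤ x₀ → 0 ≤ x₁ → 0 ≤ x₂ → x₀ + x₁ + x₂ ≤ 1 →
    l (x₀ + x₂) + l (x₁ + x₂) ≤ l (x₀ + x₁ + x₂) + l x₂ ∧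
    r (x₀ + x₁ + x₂) + r x₂ ≤ r (x₀ + x₂) + r (x₁ + x₂))

open MeasureTheory in
/-- If composing `(l, r)` with every classical probability measure yields a classical
IVPM, then `(l, r)` is ultramodular. -/
theorem IVPM_comp_implies_ultramodular (l r : ℝ → ℝ)
    (hmap : IsIntervalValuedMap l r)
    (hcomp : ∀ (Ω : Type) (_ : MeasurableSpace Ω) (μ : ProbabilityMeasure Ω),
      (l (μ (∅ : Set Ω) : ℝ) = 0 ∧ r (μ (∅ : Set Ω) : ℝ) = 0) ∧
      (l (μ (Set.univ : Set Ω) : ℝ) = 1 ∧ r (μ (Set.univ : Set Ω) : ℝ) = 1) ∧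
      (∀ E : Set Ω, MeasurableSet E →
        l (μ Eᶜ : ℝ) = 1 - r (μ E : ℝ) ∧ r (μ Eᶜ : ℝ) = 1 - l (μ E : ℝ)) ∧
      (∀ E F : Set Ω, MeasurableSet E → MeasurableSet F →
        l (μ E : ℝ) + l (μ F : ℝ) ≤ l (μ (E ∪ F) : ℝ) + l (μ (E ∩ F) : ℝ) ∧
        r (μ (E ∪ F) : ℝ) + r (μ (E ∩ F) : ℝ) ≤ r (μ E : ℝ) + r (μ F : ℝ))) :
    IsUltramodular l r := by
  classical
  refine ⟨hmap, ?_, ?_, ?_, ?_⟩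
  · have h := (hcomp (Fin 4) ⊤ (myP 0 0 0 le_rfl le_rfl le_rfl (by norm_num))).1
    have e : ((myP 0 0 0 le_rfl le_rfl le_rfl (by norm_num) (∅ : Set (Fin 4)) : ℝ≥0) : ℝ) = 0 := by
      rw [myP_real]; norm_num
    rw [e] at h; exact h
  · have h := (hcomp (Fin 4) ⊤ (myP 0 0 0 le_rfl le_rfl le_rfl (by norm_num))).2.1
    have e : ((myP 0 0 0 le_rfl le_rfl le_rfl (by norm_num) (Set.univ : Set (Fin 4)) : ℝ≥0) : ℝ) = 1 := by
      rw [myP_real]; norm_num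
    rw [e] at h; exact h
  · rintro x ⟨hx0, hx1⟩
    have hs : x + 0 + 0 ≤ 1 := by linarith
    set μ := myP x 0 0 hx0 le_rfl le_rfl hs with hμ
    have h := (hcomp (Fin 4) ⊤ μ).2.2.1 {0} trivial
    have key : ∀ S : Set (Fin 4), ((μ S : ℝ≥0) : ℝ) =
        (if (0:Fin 4) ∈ S then x else 0) + (if (1:Fin 4) ∈ S then 0 else 0)
        + (if (2:Fin 4) ∈ S then 0 else 0) + (if (3:Fin 4) ∈ S then 1 - (x+0+0) else 0) :=
      myP_real x 0 0 hx0 le_rfl le_rfl hs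
    rw [key, key] at h
    simp (config := { decide := true }) at h
    exact h
  · intro x₀ x₁ x₂ h0 h1 h2 hs
    set μ := myP x₀ x₁ x₂ h0 h1 h2 hs with hμ
    have h := (hcomp (Fin 4) ⊤ μ).2.2.2 {0, 2} {1, 2} trivial trivial
    have key : ∀ S : Set (Fin 4), ((μ S : ℝ≥0) : ℝ) =
        (if (0:Fin 4) ∈ S then x₀ else 0) + (if (1:Fin 4) ∈ S then x₁ else 0)
        + (if (2:Fin 4) ∈ S then x₂ else 0) + (if (3:Fin 4) ∈ S then 1 - (x₀+x₁+x₂) else 0) :=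
      myP_real x₀ x₁ x₂ h0 h1 h2 hs
    rw [key, key, key, key] at h
    simp (config := { decide := true }) [Set.mem_union, Set.mem_inter_iff, Set.mem_insert_iff] at h
    constructor
    · have := h.1
      convert this using 3 <;> ring
    · have := h.2
      convert this using 3 <;> ring
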